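/- arXiv:1705.10079 — 2 statements merged into one kernel-verified Lean document; each statement's English description precedes it below -/
import Mathlib

section
/- Let 0 < a < b, ρ > 0, n ∈ ℕ, and α with n−1 < α < n. For every x : [a,b] → ℝ of class C^n and every t ∈ [a,b], one has |(ᶜD_{a+}^{α,ρ} x)(t)| ≤ (ρ^{α−n}/Γ(n+1−α)) · (max_{τ∈[a,t]} |x_(n)(τ)|) · (t^ρ − a^ρ)^{n−α}. In particular (ᶜD_{a+}^{α,ρ} x)(a) = 0. -/
open MeasureTheory intervalIntegral Set Filter

/-- The iterated operator `(t^{1-ρ} d/dt)^k` applied to `x`. -/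
noncomputable def iterD (ρ : ℝ) (x : ℝ → ℝ) : ℕ → ℝ → ℝ
  | 0 => x
  | k + 1 => fun t => t ^ (1 - ρ) * deriv (iterD ρ x k) t

/-- The iterated operator `(-t^{1-ρ} d/dt)^k` applied to `x`. -/
noncomputable def iterDNeg (ρ : ℝ) (x : ℝ → ℝ) : ℕ → ℝ → ℝ
  | 0 => x
  | k + 1 => fun t => -(t ^ (1 - ρ)) * deriv (iterDNeg ρ x k) t

/-- Left-sided Katugampola fractional integral of order `β` and parameter `ρ`. -/
noncomputable def katIntLeft (a ρ β : ℝ) (x : ℝ → ℝ) (t : ℝ) : ℝ :=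
  ρ ^ (1 - β) / Real.Gamma β * ∫ τ in a..t, τ ^ (ρ - 1) * (t ^ ρ - τ ^ ρ) ^ (β - 1) * x τ

/-- Right-sided Katugampola fractional integral of order `β` and parameter `ρ`. -/
noncomputable def katIntRight (b ρ β : ℝ) (x : ℝ → ℝ) (t : ℝ) : ℝ :=
  ρ ^ (1 - β) / Real.Gamma β * ∫ τ in t..b, τ ^ (ρ - 1) * (τ ^ ρ - t ^ ρ) ^ (β - 1) * x τ

/-- Left-sided Caputo–Katugampola fractional derivative of order `α ∈ (n-1, n)`. -/
noncomputable def caputoKatLeft (a ρ α : ℝ) (n : ℕ) (x : ℝ → ℝ) (t : ℝ) : ℝ :=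
  ρ ^ (1 - (n : ℝ) + α) / Real.Gamma ((n : ℝ) - α) *
    ∫ τ in a..t, τ ^ (ρ - 1) * (t ^ ρ - τ ^ ρ) ^ ((n : ℝ) - α - 1) * iterD ρ x n τ

/-- Right-sided Caputo–Katugampola fractional derivative of order `α ∈ (n-1, n)`. -/
noncomputable def caputoKatRight (b ρ α : ℝ) (n : ℕ) (x : ℝ → ℝ) (t : ℝ) : ℝ :=
  ρ ^ (1 - (n : ℝ) + α) / Real.Gamma ((n : ℝ) - α) *
    ∫ τ in t..b, τ ^ (ρ - 1) * (τ ^ ρ - t ^ ρ) ^ ((n : ℝ) - α - 1) *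
      ((-1 : ℝ) ^ n * iterD ρ x n τ)

/-- Left-sided (Riemann–Liouville type) Katugampola fractional derivative. -/
noncomputable def katDerivLeft (a ρ α : ℝ) (n : ℕ) (x : ℝ → ℝ) (t : ℝ) : ℝ :=
  iterD ρ (katIntLeft a ρ ((n : ℝ) - α) x) n t

/-- Right-sided (Riemann–Liouville type) Katugampola fractional derivative. -/
noncomputable def katDerivRight (b ρ α : ℝ) (n : ℕ) (x : ℝ → ℝ) (t : ℝ) : ℝ :=
  iterDNeg ρ (katIntRight b ρ ((n : ℝ) - α) x) n t

/-- The Mittag-Leffler function `E_α(t) = Σ_{k≥0} t^k / Γ(αk+1)`. -/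
noncomputable def mittagLeffler (α t : ℝ) : ℝ := ∑' k : ℕ, t ^ k / Real.Gamma (α * k + 1)

lemma iterD_good (a b ρ : ℝ) (x : ℝ → ℝ) (n : ℕ) (ha : 0 < a) (hab : a < b)
    (hx : ContDiffOn ℝ n x (Set.Icc a b)) :
    ∀ k ≤ n, ∃ g : ℝ → ℝ, ContDiffOn ℝ ((n - k : ℕ)) g (Set.Icc a b) ∧
      ∀ τ ∈ Set.Ioo a b, iterD ρ x k τ = g τ := by
  intro k
  induction k with
  | zero => exact fun _ => ⟨x, by simpa using hx, fun τ _ => rfl⟩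
  | succ k ih =>
    intro hk
    obtain ⟨g, hg, heq⟩ := ih (Nat.le_of_succ_le hk)
    refine ⟨fun τ => τ ^ (1 - ρ) * derivWithin g (Set.Icc a b) τ, ?_, ?_⟩
    · have h1 : ContDiffOn ℝ ((n - (k+1) : ℕ)) (fun τ : ℝ => τ ^ (1 - ρ)) (Set.Icc a b) :=
        fun τ hτ => (Real.contDiffAt_rpow_const_of_ne
          (ne_of_gt (lt_of_lt_of_le ha hτ.1))).contDiffWithinAt
      have h2 : ContDiffOn ℝ ((n - (k+1) : ℕ)) (derivWithin g (Set.Icc a b)) (Set.Icc a b) := by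
        apply hg.derivWithin (uniqueDiffOn_Icc hab)
        have h3 : n - (k+1) + 1 ≤ n - k := by omega
        exact_mod_cast Nat.cast_le.mpr h3
      exact h1.mul h2
    · intro τ hτ
      have hmem : Set.Ioo a b ∈ nhds τ := isOpen_Ioo.mem_nhds hτ
      have hd : deriv (iterD ρ x k) τ = deriv g τ :=
        Filter.EventuallyEq.deriv_eq (Filter.eventuallyEq_of_mem hmem heq)
      show τ ^ (1-ρ) * deriv (iterD ρ x k) τ = _
      rw [hd, ← derivWithin_of_mem_nhds (Icc_mem_nhds hτ.1 hτ.2)]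

lemma g0_facts (a t ρ β : ℝ) (ha : 0 < a) (hat : a < t) (hρ : 0 < ρ)
    (hβ0 : 0 < β) (hβ1 : β < 1) :
    IntervalIntegrable (fun τ => τ ^ (ρ-1) * (t^ρ - τ^ρ) ^ (β-1)) volume a t ∧
    ∫ τ in a..t, τ ^ (ρ-1) * (t^ρ - τ^ρ) ^ (β-1) = (t^ρ - a^ρ) ^ β / (ρ * β) := by
  have ht0 : (0:ℝ) < t := ha.trans hat
  set φ : ℝ → ℝ := fun τ => τ ^ ρ with hφ
  set G : ℝ → ℝ := fun u => (t ^ ρ - u) ^ (β - 1) with hG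
  have hder : ∀ τ ∈ Set.Ioo a t, HasDerivWithinAt φ (ρ * τ ^ (ρ-1)) (Set.Ioo a t) τ :=
    fun τ hτ => (Real.hasDerivAt_rpow_const
      (Or.inl (ne_of_gt (ha.trans hτ.1)))).hasDerivWithinAt
  have hmono : StrictMonoOn φ (Set.Ioo a t) :=
    fun u hu v hv huv => Real.rpow_lt_rpow (le_of_lt (ha.trans hu.1)) huv hρ
  have hinj : Set.InjOn φ (Set.Ioo a t) := hmono.injOn
  have himg : φ '' Set.Ioo a t = Set.Ioo (a ^ ρ) (t ^ ρ) := by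
    ext u
    constructor
    · rintro ⟨τ, hτ, rfl⟩
      exact ⟨Real.rpow_lt_rpow ha.le hτ.1 hρ, Real.rpow_lt_rpow (ha.trans hτ.1).le hτ.2 hρ⟩
    · intro hu
      have hu0 : 0 < u := lt_trans (Real.rpow_pos_of_pos ha ρ) hu.1
      refine ⟨u ^ ρ⁻¹, ⟨?_, ?_⟩, Real.rpow_inv_rpow hu0.le (ne_of_gt hρ)⟩
      · have := Real.rpow_lt_rpow (Real.rpow_pos_of_pos ha ρ).le hu.1 (inv_pos.mpr hρ)
        rwa [Real.rpow_rpow_inv ha.le (ne_of_gt hρ)] at this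
      · have := Real.rpow_lt_rpow hu0.le hu.2 (inv_pos.mpr hρ)
        rwa [Real.rpow_rpow_inv ht0.le (ne_of_gt hρ)] at this
  have hGint : IntegrableOn G (Set.Ioo (a ^ ρ) (t ^ ρ)) := by
    have h1 : IntervalIntegrable (fun v : ℝ => v ^ (β-1)) volume 0 (t^ρ - a^ρ) :=
      intervalIntegral.intervalIntegrable_rpow' (by linarith)
    have h2 := (h1.comp_sub_left (t ^ ρ)).symm
    simp only [sub_zero, sub_sub_cancel] at h2
    exact (intervalIntegrable_iff_integrableOn_Ioo_of_le
      (le_of_lt (Real.rpow_lt_rpow ha.le hat hρ))).mp h2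
  have hkey := integrableOn_image_iff_integrableOn_abs_deriv_smul
    measurableSet_Ioo hder hinj G
  rw [himg] at hkey
  have hint2 : IntegrableOn (fun τ => |ρ * τ ^ (ρ-1)| • G (φ τ)) (Set.Ioo a t) := hkey.mp hGint
  have heqset : Set.EqOn (fun τ => τ ^ (ρ-1) * (t^ρ - τ^ρ) ^ (β-1))
      (fun τ => ρ⁻¹ * (|ρ * τ ^ (ρ-1)| • G (φ τ))) (Set.Ioo a t) := by
    intro τ hτ
    have hτ0 : 0 < τ := ha.trans hτ.1
    simp only [smul_eq_mul, hG, hφ]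
    rw [abs_of_pos (by positivity : (0:ℝ) < ρ * τ ^ (ρ-1))]
    field_simp
  have hint3 : IntervalIntegrable (fun τ => τ ^ (ρ-1) * (t^ρ - τ^ρ) ^ (β-1)) volume a t := by
    rw [intervalIntegrable_iff_integrableOn_Ioo_of_le hat.le]
    have hint4 : IntegrableOn (fun τ => ρ⁻¹ * (|ρ * τ ^ (ρ-1)| • G (φ τ))) (Set.Ioo a t) :=
      hint2.const_mul ρ⁻¹
    exact hint4.congr_fun (fun τ hτ => (heqset hτ).symm) measurableSet_Ioo
  refine ⟨hint3, ?_⟩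
  have hval : ∫ u in a^ρ..t^ρ, G u = (t^ρ - a^ρ) ^ β / β := by
    rw [hG]
    rw [intervalIntegral.integral_comp_sub_left (fun v : ℝ => v ^ (β-1)) (t ^ ρ)]
    rw [sub_self]
    rw [integral_rpow (Or.inl (by linarith))]
    rw [Real.zero_rpow (by linarith : β - 1 + 1 ≠ 0), sub_add_cancel, sub_zero]
  have hchg := integral_image_eq_integral_abs_deriv_smul measurableSet_Ioo hder hinj G
  rw [himg] at hchg
  rw [intervalIntegral.integral_of_le hat.le, integral_Ioc_eq_integral_Ioo]
  rw [setIntegral_congr_fun measurableSet_Ioo heqset]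
  rw [MeasureTheory.integral_const_mul, ← hchg]
  rw [intervalIntegral.integral_of_le (Real.rpow_lt_rpow ha.le hat hρ).le,
    integral_Ioc_eq_integral_Ioo] at hval
  rw [hval]
  field_simp

theorem abs_caputoKatLeft_le
    (a b ρ α : ℝ) (n : ℕ) (ha : 0 < a) (hab : a < b) (hρ : 0 < ρ)
    (hα₁ : (n : ℝ) - 1 < α) (hα₂ : α < n)
    (x : ℝ → ℝ) (hx : ContDiffOn ℝ n x (Set.Icc a b))
    (t : ℝ) (ht : t ∈ Set.Icc a b) :
    |caputoKatLeft a ρ α n x t| ≤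
      ρ ^ (α - (n : ℝ)) / Real.Gamma ((n : ℝ) + 1 - α) *
        sSup ((fun τ => |iterD ρ x n τ|) '' Set.Icc a t) *
        (t ^ ρ - a ^ ρ) ^ ((n : ℝ) - α) ∧
    caputoKatLeft a ρ α n x a = 0 := by
  have hβ0 : (0:ℝ) < (n:ℝ) - α := by linarith
  have hβ1 : (n:ℝ) - α < 1 := by linarith
  have hΓ0 : 0 < Real.Gamma ((n:ℝ) - α) := Real.Gamma_pos_of_pos hβ0
  have hpart2 : caputoKatLeft a ρ α n x a = 0 := by
    simp [caputoKatLeft]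
  refine ⟨?_, hpart2⟩
  rcases eq_or_lt_of_le ht.1 with h | hat
  · rw [← h, hpart2, abs_zero, sub_self, Real.zero_rpow (ne_of_gt hβ0), mul_zero]
  · have ht0 : 0 < t := ha.trans hat
    have htb : t ≤ b := ht.2
    obtain ⟨g, hg0, heq⟩ := iterD_good a b ρ x n ha hab hx n le_rfl
    have hgc : ContinuousOn g (Set.Icc a b) := (contDiffOn_zero (𝕜 := ℝ)).mp (by simpa using hg0)
    have hCex : ∃ C, ∀ τ ∈ Set.Icc a t, ‖g τ‖ ≤ C :=
      IsCompact.exists_bound_of_continuousOn isCompact_Icc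
        (hgc.mono (Set.Icc_subset_Icc le_rfl htb))
    obtain ⟨C, hC⟩ := hCex
    set f := iterD ρ x n with hf
    set M := sSup ((fun τ => |f τ|) '' Set.Icc a t) with hM
    have hbddf : ∀ τ ∈ Set.Icc a t, |f τ| ≤ max C (max |f a| |f t|) := by
      intro τ hτ
      rcases eq_or_lt_of_le hτ.1 with h1 | h1
      · rw [← h1]; exact le_max_of_le_right (le_max_left _ _)
      rcases eq_or_lt_of_le hτ.2 with h2 | h2
      · rw [h2]; exact le_max_of_le_right (le_max_right _ _)
      · rw [heq τ ⟨h1, lt_of_lt_of_le h2 htb⟩]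
        exact le_max_of_le_left (by simpa using hC τ ⟨h1.le, h2.le⟩)
    have hbdd : BddAbove ((fun τ => |f τ|) '' Set.Icc a t) :=
      ⟨max C (max |f a| |f t|), by rintro _ ⟨τ, hτ, rfl⟩; exact hbddf τ hτ⟩
    have hMle : ∀ τ ∈ Set.Icc a t, |f τ| ≤ M := fun τ hτ => le_csSup hbdd ⟨τ, hτ, rfl⟩
    have hM0 : 0 ≤ M := le_trans (abs_nonneg _) (hMle a ⟨le_refl a, hat.le⟩)
    obtain ⟨hint, hval⟩ := g0_facts a t ρ ((n:ℝ) - α) ha hat hρ hβ0 hβ1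
    have hexp : ∀ τ : ℝ, ((n:ℝ) - α - 1) = ((n:ℝ) - α) - 1 := fun _ => rfl
    have hMg : IntervalIntegrable
        (fun τ => M * (τ ^ (ρ-1) * (t^ρ - τ^ρ) ^ (((n:ℝ)-α)-1))) volume a t :=
      hint.const_mul M
    have hae : ∀ᵐ τ ∂(volume.restrict (Set.uIoc a t)),
        ‖τ ^ (ρ-1) * (t^ρ - τ^ρ) ^ (((n:ℝ)-α)-1) * f τ‖ ≤
          M * (τ ^ (ρ-1) * (t^ρ - τ^ρ) ^ (((n:ℝ)-α)-1)) := by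
      rw [Set.uIoc_of_le hat.le]
      filter_upwards [ae_restrict_mem measurableSet_Ioc] with τ hτ
      have hτ0 : 0 < τ := ha.trans hτ.1
      have hg0nn : 0 ≤ τ ^ (ρ-1) * (t^ρ - τ^ρ) ^ (((n:ℝ)-α)-1) := by
        apply mul_nonneg (Real.rpow_nonneg hτ0.le _)
        apply Real.rpow_nonneg
        have : τ ^ ρ ≤ t ^ ρ := Real.rpow_le_rpow hτ0.le hτ.2 hρ.le
        linarith
      rw [Real.norm_eq_abs, abs_mul, abs_of_nonneg hg0nn, mul_comm M _]
      exact mul_le_mul_of_nonneg_left (hMle τ ⟨hτ.1.le, hτ.2⟩) hg0nn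
    have hb := intervalIntegral.norm_integral_le_abs_of_norm_le hae hMg
    rw [intervalIntegral.integral_const_mul, hval] at hb
    have hX0 : 0 ≤ (t^ρ - a^ρ) ^ ((n:ℝ)-α) := by
      apply Real.rpow_nonneg
      have : a ^ ρ ≤ t ^ ρ := Real.rpow_le_rpow ha.le hat.le hρ.le
      linarith
    have hI0 : 0 ≤ M * ((t^ρ - a^ρ) ^ ((n:ℝ)-α) / (ρ * ((n:ℝ)-α))) := by positivity
    rw [abs_of_nonneg hI0] at hb
    have hCnn : 0 ≤ ρ ^ (1 - (n:ℝ) + α) / Real.Gamma ((n:ℝ) - α) :=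
      div_nonneg (Real.rpow_nonneg hρ.le _) hΓ0.le
    show |ρ ^ (1 - (n : ℝ) + α) / Real.Gamma ((n : ℝ) - α) *
      ∫ τ in a..t, τ ^ (ρ - 1) * (t ^ ρ - τ ^ ρ) ^ ((n : ℝ) - α - 1) * f τ| ≤ _
    have hmain : |ρ ^ (1 - (n : ℝ) + α) / Real.Gamma ((n : ℝ) - α) *
        ∫ τ in a..t, τ ^ (ρ - 1) * (t ^ ρ - τ ^ ρ) ^ ((n : ℝ) - α - 1) * f τ| ≤
        ρ ^ (1 - (n:ℝ) + α) / Real.Gamma ((n:ℝ) - α) *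
          (M * ((t^ρ - a^ρ) ^ ((n:ℝ)-α) / (ρ * ((n:ℝ)-α)))) := by
      rw [abs_mul, abs_of_nonneg hCnn]
      apply mul_le_mul_of_nonneg_left _ hCnn
      calc |∫ τ in a..t, τ ^ (ρ - 1) * (t ^ ρ - τ ^ ρ) ^ ((n : ℝ) - α - 1) * f τ|
          = ‖∫ τ in a..t, τ ^ (ρ - 1) * (t ^ ρ - τ ^ ρ) ^ (((n : ℝ) - α) - 1) * f τ‖ := by
            rw [Real.norm_eq_abs]
        _ ≤ M * ((t^ρ - a^ρ) ^ ((n:ℝ)-α) / (ρ * ((n:ℝ)-α))) := hb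
    refine le_trans hmain (le_of_eq ?_)
    have hΓ1 : Real.Gamma ((n:ℝ) + 1 - α) = ((n:ℝ) - α) * Real.Gamma ((n:ℝ) - α) := by
      rw [show (n:ℝ) + 1 - α = ((n:ℝ) - α) + 1 by ring, Real.Gamma_add_one (ne_of_gt hβ0)]
    have hρ1 : ρ ^ (1 - (n:ℝ) + α) = ρ ^ (α - (n:ℝ)) * ρ := by
      rw [show (1:ℝ) - (n:ℝ) + α = (α - (n:ℝ)) + 1 by ring, Real.rpow_add_one (ne_of_gt hρ)]
    rw [hΓ1, hρ1]
    field_simp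
end

section
/- Let 0 < a < b, ρ > 0, n ∈ ℕ, α with n−1 < α < n, and set K = (ρ^{α−n}/Γ(n+1−α)) (b^ρ − a^ρ)^{n−α}. Then for every x : [a,b] → ℝ of class C^n, one has ‖ᶜD_{a+}^{α,ρ} x‖_C ≤ K · ‖x‖_{C^n}^ρ and ‖ᶜD_{b−}^{α,ρ} x‖_C ≤ K · ‖x‖_{C^n}^ρ; that is, the left- and right-sided Caputo–Katugampola fractional derivatives are bounded operators from C^n[a,b] to C[a,b]. -/
open MeasureTheory intervalIntegral Set Filter

/-! ### Auxiliary lemmas -/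

section Aux

variable {a b ρ β : ℝ}

lemma myAux_rpow_base_bound (ha : 0 < a) {s : ℝ} (h1 : a ≤ s) (h2 : s ≤ b) :
    min (a ^ (ρ - 1)) (b ^ (ρ - 1)) ≤ s ^ (ρ - 1) ∧
      s ^ (ρ - 1) ≤ max (a ^ (ρ - 1)) (b ^ (ρ - 1)) := by
  rcases le_total 1 ρ with h | h
  · exact ⟨le_trans (min_le_left _ _) (Real.rpow_le_rpow ha.le h1 (by linarith)),
      le_trans (Real.rpow_le_rpow (ha.trans_le h1).le h2 (by linarith)) (le_max_right _ _)⟩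
  · exact ⟨le_trans (min_le_right _ _)
        (Real.rpow_le_rpow_of_nonpos (ha.trans_le h1) h2 (by linarith)),
      le_trans (Real.rpow_le_rpow_of_nonpos ha h1 (by linarith)) (le_max_left _ _)⟩

lemma myAux_rpow_sub_lower (ha : 0 < a) (hρ : 0 < ρ) {c d : ℝ}
    (hac : a ≤ c) (hcd : c ≤ d) (hdb : d ≤ b) :
    ρ * min (a ^ (ρ - 1)) (b ^ (ρ - 1)) * (d - c) ≤ d ^ ρ - c ^ ρ := by
  set m := ρ * min (a ^ (ρ - 1)) (b ^ (ρ - 1)) with hm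
  have hd : ∀ s : ℝ, 0 < s →
      HasDerivAt (fun s : ℝ => s ^ ρ - m * s) (ρ * s ^ (ρ - 1) - m) s := by
    intro s hs
    have hlin : HasDerivAt (fun s : ℝ => m * s) m s := by
      simpa using (hasDerivAt_id s).const_mul m
    exact (Real.hasDerivAt_rpow_const (Or.inl hs.ne')).sub hlin
  have hmono : MonotoneOn (fun s : ℝ => s ^ ρ - m * s) (Set.Icc a b) := by
    apply monotoneOn_of_deriv_nonneg (convex_Icc a b)
    · intro s hs
      exact ((hd s (ha.trans_le hs.1)).continuousAt).continuousWithinAt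
    · intro s hs
      rw [interior_Icc] at hs
      exact (hd s (ha.trans hs.1)).differentiableAt.differentiableWithinAt
    · intro s hs
      rw [interior_Icc] at hs
      rw [(hd s (ha.trans hs.1)).deriv]
      have h1 := (myAux_rpow_base_bound (ρ := ρ) ha hs.1.le hs.2.le).1
      have h2 : m ≤ ρ * s ^ (ρ - 1) := by
        rw [hm]; exact mul_le_mul_of_nonneg_left h1 hρ.le
      linarith
  have key := hmono ⟨hac, hcd.trans hdb⟩ ⟨hac.trans hcd, hdb⟩ hcd
  simp only at key
  rw [mul_sub]
  linarith

lemma myAux_m_pos (ha : 0 < a) (hb : 0 < b) (hρ : 0 < ρ) :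
    0 < ρ * min (a ^ (ρ - 1)) (b ^ (ρ - 1)) :=
  mul_pos hρ (lt_min (Real.rpow_pos_of_pos ha _) (Real.rpow_pos_of_pos hb _))

lemma myAux_meas_left (ρ β t : ℝ) :
    Measurable fun τ : ℝ => τ ^ (ρ - 1) * (t ^ ρ - τ ^ ρ) ^ (β - 1) := by
  measurability

lemma myAux_meas_right (ρ β t : ℝ) :
    Measurable fun τ : ℝ => τ ^ (ρ - 1) * (τ ^ ρ - t ^ ρ) ^ (β - 1) := by
  measurability

lemma myAux_meas_pow (c : ℝ) : Measurable fun τ : ℝ => τ ^ c := by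
  measurability

lemma myAux_integrable_left (ha : 0 < a) (hρ : 0 < ρ) (hβ0 : 0 < β) (hβ1 : β < 1)
    {t : ℝ} (hat : a ≤ t) (htb : t ≤ b) :
    IntervalIntegrable (fun τ => τ ^ (ρ - 1) * (t ^ ρ - τ ^ ρ) ^ (β - 1)) volume a t := by
  have hb : 0 < b := ha.trans_le (hat.trans htb)
  set m := ρ * min (a ^ (ρ - 1)) (b ^ (ρ - 1)) with hm
  have hmpos : 0 < m := myAux_m_pos ha hb hρ
  set C := max (a ^ (ρ - 1)) (b ^ (ρ - 1)) * m ^ (β - 1) with hC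
  have hg : IntervalIntegrable (fun τ => C * (t - τ) ^ (β - 1)) volume a t := by
    have h0 : IntervalIntegrable (fun u : ℝ => u ^ (β - 1)) volume 0 (t - a) :=
      intervalIntegrable_rpow' (by linarith)
    have h1 := h0.comp_sub_left t
    simp only [sub_zero, sub_sub_cancel] at h1
    exact h1.symm.const_mul C
  apply hg.mono_fun'
  · exact (myAux_meas_left ρ β t).aestronglyMeasurable
  · rw [Filter.EventuallyLE, ae_restrict_iff' measurableSet_uIoc]
    apply ae_of_all
    intro τ hτ
    rw [Set.uIoc_of_le hat] at hτ
    obtain ⟨hτ1, hτ2⟩ := hτ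
    have hτ0 : 0 < τ := ha.trans hτ1
    rcases eq_or_lt_of_le hτ2 with rfl | hlt
    · have h1 : ((0:ℝ)) ^ (β - 1) = 0 := Real.zero_rpow (by linarith)
      simp [h1]
    · have hsub : m * (t - τ) ≤ t ^ ρ - τ ^ ρ := by
        have := myAux_rpow_sub_lower ha hρ hτ1.le hτ2 htb
        rw [← hm] at this; exact this
      have hpos : 0 < t ^ ρ - τ ^ ρ :=
        lt_of_lt_of_le (mul_pos hmpos (by linarith)) hsub
      have hnn : 0 ≤ τ ^ (ρ - 1) * (t ^ ρ - τ ^ ρ) ^ (β - 1) :=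
        mul_nonneg (Real.rpow_nonneg hτ0.le _) (Real.rpow_nonneg hpos.le _)
      rw [Real.norm_eq_abs, abs_of_nonneg hnn]
      have hBpos : 0 < m * (t - τ) := mul_pos hmpos (by linarith)
      calc τ ^ (ρ - 1) * (t ^ ρ - τ ^ ρ) ^ (β - 1)
          ≤ max (a ^ (ρ - 1)) (b ^ (ρ - 1)) * (m * (t - τ)) ^ (β - 1) :=
            mul_le_mul (myAux_rpow_base_bound ha hτ1.le (hτ2.trans htb)).2
              (Real.rpow_le_rpow_of_nonpos hBpos hsub (by linarith : β - 1 ≤ 0))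
              (Real.rpow_nonneg hpos.le _)
              (le_trans (Real.rpow_nonneg ha.le _) (le_max_left _ _))
        _ = C * (t - τ) ^ (β - 1) := by
            rw [hC, Real.mul_rpow hmpos.le (by linarith : (0:ℝ) ≤ t - τ)]; ring

lemma myAux_integral_left (ha : 0 < a) (hρ : 0 < ρ) (hβ0 : 0 < β) (hβ1 : β < 1)
    {t : ℝ} (hat : a ≤ t) (htb : t ≤ b) :
    (∫ τ in a..t, τ ^ (ρ - 1) * (t ^ ρ - τ ^ ρ) ^ (β - 1))
      = (t ^ ρ - a ^ ρ) ^ β / (ρ * β) := by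
  have key := integral_eq_sub_of_hasDerivAt_of_le (f := fun τ => -((t ^ ρ - τ ^ ρ) ^ β) / (ρ * β))
      (f' := fun τ => τ ^ (ρ - 1) * (t ^ ρ - τ ^ ρ) ^ (β - 1)) hat
      ?cont ?deriv (myAux_integrable_left ha hρ hβ0 hβ1 hat htb)
  · simp only [key, sub_self, Real.zero_rpow hβ0.ne']
    ring
  case cont =>
    apply ContinuousOn.div_const
    apply ContinuousOn.neg
    apply ContinuousOn.rpow_const
    · exact continuousOn_const.sub (fun s hs =>
        (Real.continuousAt_rpow_const s ρ (Or.inl (ha.trans_le hs.1).ne')).continuousWithinAt)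
    · exact fun s _ => Or.inr hβ0.le
  case deriv =>
    intro s hs
    have hs0 : 0 < s := ha.trans hs.1
    have hpos : 0 < t ^ ρ - s ^ ρ :=
      sub_pos.mpr (Real.rpow_lt_rpow hs0.le hs.2 hρ)
    have h1 : HasDerivAt (fun τ : ℝ => t ^ ρ - τ ^ ρ) (-(ρ * s ^ (ρ - 1))) s :=
      (Real.hasDerivAt_rpow_const (Or.inl hs0.ne')).const_sub (t ^ ρ)
    have h2 := (h1.rpow_const (p := β) (Or.inl hpos.ne')).neg.div_const (ρ * β)
    refine h2.congr_deriv (Eq.symm ?_)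
    rw [eq_div_iff (by positivity : ρ * β ≠ 0)]
    ring

lemma myAux_integrable_right (ha : 0 < a) (hρ : 0 < ρ) (hβ0 : 0 < β) (hβ1 : β < 1)
    {t : ℝ} (hat : a ≤ t) (htb : t ≤ b) :
    IntervalIntegrable (fun τ => τ ^ (ρ - 1) * (τ ^ ρ - t ^ ρ) ^ (β - 1)) volume t b := by
  have hb : 0 < b := ha.trans_le (hat.trans htb)
  set m := ρ * min (a ^ (ρ - 1)) (b ^ (ρ - 1)) with hm
  have hmpos : 0 < m := myAux_m_pos ha hb hρ
  set C := max (a ^ (ρ - 1)) (b ^ (ρ - 1)) * m ^ (β - 1) with hC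
  have hg : IntervalIntegrable (fun τ => C * (τ - t) ^ (β - 1)) volume t b := by
    have h0 : IntervalIntegrable (fun u : ℝ => u ^ (β - 1)) volume 0 (b - t) :=
      intervalIntegrable_rpow' (by linarith)
    have h1 := h0.comp_sub_right t
    simp only [zero_add, sub_add_cancel] at h1
    exact h1.const_mul C
  apply hg.mono_fun'
  · exact (myAux_meas_right ρ β t).aestronglyMeasurable
  · rw [Filter.EventuallyLE, ae_restrict_iff' measurableSet_uIoc]
    apply ae_of_all
    intro τ hτ
    rw [Set.uIoc_of_le htb] at hτ
    obtain ⟨hτ1, hτ2⟩ := hτ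
    have hτ0 : 0 < τ := (ha.trans_le hat).trans hτ1
    have hsub : m * (τ - t) ≤ τ ^ ρ - t ^ ρ := by
      have := myAux_rpow_sub_lower ha hρ hat hτ1.le hτ2
      rw [← hm] at this; exact this
    have hpos : 0 < τ ^ ρ - t ^ ρ :=
      lt_of_lt_of_le (mul_pos hmpos (by linarith)) hsub
    have hnn : 0 ≤ τ ^ (ρ - 1) * (τ ^ ρ - t ^ ρ) ^ (β - 1) :=
      mul_nonneg (Real.rpow_nonneg hτ0.le _) (Real.rpow_nonneg hpos.le _)
    rw [Real.norm_eq_abs, abs_of_nonneg hnn]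
    have hBpos : 0 < m * (τ - t) := mul_pos hmpos (by linarith)
    calc τ ^ (ρ - 1) * (τ ^ ρ - t ^ ρ) ^ (β - 1)
        ≤ max (a ^ (ρ - 1)) (b ^ (ρ - 1)) * (m * (τ - t)) ^ (β - 1) :=
          mul_le_mul (myAux_rpow_base_bound ha (hat.trans hτ1.le) hτ2).2
            (Real.rpow_le_rpow_of_nonpos hBpos hsub (by linarith : β - 1 ≤ 0))
            (Real.rpow_nonneg hpos.le _)
            (le_trans (Real.rpow_nonneg ha.le _) (le_max_left _ _))
      _ = C * (τ - t) ^ (β - 1) := by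
          rw [hC, Real.mul_rpow hmpos.le (by linarith : (0:ℝ) ≤ τ - t)]; ring

lemma myAux_integral_right (ha : 0 < a) (hρ : 0 < ρ) (hβ0 : 0 < β) (hβ1 : β < 1)
    {t : ℝ} (hat : a ≤ t) (htb : t ≤ b) :
    (∫ τ in t..b, τ ^ (ρ - 1) * (τ ^ ρ - t ^ ρ) ^ (β - 1))
      = (b ^ ρ - t ^ ρ) ^ β / (ρ * β) := by
  have key := integral_eq_sub_of_hasDerivAt_of_le (f := fun τ => (τ ^ ρ - t ^ ρ) ^ β / (ρ * β))
      (f' := fun τ => τ ^ (ρ - 1) * (τ ^ ρ - t ^ ρ) ^ (β - 1)) htb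
      ?cont ?deriv (myAux_integrable_right ha hρ hβ0 hβ1 hat htb)
  · simp only [key, sub_self, Real.zero_rpow hβ0.ne']
    ring
  case cont =>
    apply ContinuousOn.div_const
    apply ContinuousOn.rpow_const
    · exact (ContinuousOn.sub (fun s hs =>
        (Real.continuousAt_rpow_const s ρ
          (Or.inl ((ha.trans_le hat).trans_le hs.1).ne')).continuousWithinAt)
        continuousOn_const)
    · exact fun s _ => Or.inr hβ0.le
  case deriv =>
    intro s hs
    have hs0 : 0 < s := (ha.trans_le hat).trans hs.1
    have hpos : 0 < s ^ ρ - t ^ ρ :=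
      sub_pos.mpr (Real.rpow_lt_rpow (ha.trans_le hat).le hs.1 hρ)
    have h1 : HasDerivAt (fun τ : ℝ => τ ^ ρ - t ^ ρ) (ρ * s ^ (ρ - 1)) s :=
      (Real.hasDerivAt_rpow_const (Or.inl hs0.ne')).sub_const (t ^ ρ)
    have h2 := (h1.rpow_const (p := β) (Or.inl hpos.ne')).div_const (ρ * β)
    refine h2.congr_deriv (Eq.symm ?_)
    rw [eq_div_iff (by positivity : ρ * β ≠ 0)]
    ring

/-- The "within" version of the iterated operator. -/
noncomputable def gAux (a b ρ : ℝ) (x : ℝ → ℝ) : ℕ → ℝ → ℝ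
  | 0 => x
  | k + 1 => fun t => t ^ (1 - ρ) * derivWithin (gAux a b ρ x k) (Set.Icc a b) t

lemma gAux_contDiffOn {x : ℝ → ℝ} {n : ℕ} (ha : 0 < a) (hab : a < b)
    (hx : ContDiffOn ℝ n x (Set.Icc a b)) :
    ∀ k, k ≤ n → ContDiffOn ℝ ((n - k : ℕ)) (gAux a b ρ x k) (Set.Icc a b) := by
  intro k
  induction k with
  | zero => intro _; simpa [gAux] using hx
  | succ k ih =>
    intro hk
    have ihk := ih (by omega)
    have hd : ContDiffOn ℝ ((n - (k + 1) : ℕ))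
        (derivWithin (gAux a b ρ x k) (Set.Icc a b)) (Set.Icc a b) := by
      apply ihk.derivWithin (uniqueDiffOn_Icc hab)
      have : (n - (k + 1) : ℕ) + 1 = (n - k : ℕ) := by omega
      norm_cast
      rw [this]
    have hr : ContDiffOn ℝ ((n - (k + 1) : ℕ)) (fun t : ℝ => t ^ (1 - ρ)) (Set.Icc a b) :=
      fun t ht =>
        (Real.contDiffAt_rpow_const_of_ne (ne_of_gt (ha.trans_le ht.1))).contDiffWithinAt
    exact hr.mul hd

lemma gAux_eq {x : ℝ → ℝ} (hab : a < b) :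
    ∀ k, ∀ t ∈ Set.Ioo a b, iterD ρ x k t = gAux a b ρ x k t := by
  intro k
  induction k with
  | zero => intro t _; rfl
  | succ k ih =>
    intro t ht
    show t ^ (1 - ρ) * deriv (iterD ρ x k) t
      = t ^ (1 - ρ) * derivWithin (gAux a b ρ x k) (Set.Icc a b) t
    congr 1
    rw [derivWithin_of_mem_nhds (Icc_mem_nhds ht.1 ht.2)]
    apply Filter.EventuallyEq.deriv_eq
    filter_upwards [isOpen_Ioo.mem_nhds ht] with s hs using ih s hs

lemma iterD_bound {x : ℝ → ℝ} {n : ℕ} (ha : 0 < a) (hab : a < b)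
    (hx : ContDiffOn ℝ n x (Set.Icc a b)) (k : ℕ) (hk : k ≤ n) :
    ∃ M, ∀ t ∈ Set.Icc a b, |iterD ρ x k t| ≤ M := by
  have hc : ContinuousOn (gAux a b ρ x k) (Set.Icc a b) :=
    (gAux_contDiffOn ha hab hx k hk).continuousOn
  obtain ⟨M, hM⟩ := isCompact_Icc.exists_bound_of_continuousOn hc
  refine ⟨max M (max |iterD ρ x k a| |iterD ρ x k b|), fun t ht => ?_⟩
  rcases eq_or_lt_of_le ht.1 with rfl | h1
  · exact le_max_of_le_right (le_max_left _ _)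
  rcases eq_or_lt_of_le ht.2 with rfl | h2
  · exact le_max_of_le_right (le_max_right _ _)
  · rw [gAux_eq hab k t ⟨h1, h2⟩]
    exact le_max_of_le_left (by simpa [Real.norm_eq_abs] using hM t ht)

lemma iterD_aesm {ρ : ℝ} {x : ℝ → ℝ} {s : Set ℝ} (hs : MeasurableSet s)
    (hx : ContinuousOn x s) (k : ℕ) :
    AEStronglyMeasurable (iterD ρ x k) (volume.restrict s) := by
  cases k with
  | zero => exact hx.aestronglyMeasurable hs
  | succ k =>
    have hmeas : Measurable (iterD ρ x (k + 1)) := by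
      show Measurable fun t => t ^ (1 - ρ) * deriv (iterD ρ x k) t
      exact (myAux_meas_pow (1 - ρ)).mul (measurable_deriv _)
    exact hmeas.aestronglyMeasurable

end Aux

theorem caputoKat_bounded_operator
    (a b ρ α : ℝ) (n : ℕ) (ha : 0 < a) (hab : a < b) (hρ : 0 < ρ)
    (hα₁ : (n : ℝ) - 1 < α) (hα₂ : α < n)
    (K : ℝ) (hK : K = ρ ^ (α - (n : ℝ)) / Real.Gamma ((n : ℝ) + 1 - α) *
      (b ^ ρ - a ^ ρ) ^ ((n : ℝ) - α))
    (x : ℝ → ℝ) (hx : ContDiffOn ℝ n x (Set.Icc a b)) :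
    sSup ((fun t => |caputoKatLeft a ρ α n x t|) '' Set.Icc a b) ≤
      K * ∑ k ∈ Finset.range (n + 1), sSup ((fun t => |iterD ρ x k t|) '' Set.Icc a b) ∧
    sSup ((fun t => |caputoKatRight b ρ α n x t|) '' Set.Icc a b) ≤
      K * ∑ k ∈ Finset.range (n + 1), sSup ((fun t => |iterD ρ x k t|) '' Set.Icc a b) := by
  have hb : 0 < b := ha.trans hab
  set β : ℝ := (n : ℝ) - α with hβ
  have hβ0 : 0 < β := by rw [hβ]; linarith
  have hβ1 : β < 1 := by rw [hβ]; linarith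
  have hΓ : 0 < Real.Gamma β := Real.Gamma_pos_of_pos hβ0
  set Mk : ℕ → ℝ := fun k => sSup ((fun t => |iterD ρ x k t|) '' Set.Icc a b) with hMk
  have hbdd : ∀ k, k ≤ n → BddAbove ((fun t => |iterD ρ x k t|) '' Set.Icc a b) := by
    intro k hk
    obtain ⟨M, hM⟩ := iterD_bound ha hab hx k hk
    exact ⟨M, by rintro y ⟨t, ht, rfl⟩; exact hM t ht⟩
  have hle : ∀ k, k ≤ n → ∀ t ∈ Set.Icc a b, |iterD ρ x k t| ≤ Mk k :=
    fun k hk t ht => le_csSup (hbdd k hk) ⟨t, ht, rfl⟩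
  have hM0 : ∀ k, k ≤ n → 0 ≤ Mk k := fun k hk =>
    (abs_nonneg _).trans (hle k hk a ⟨le_rfl, hab.le⟩)
  have hsum : Mk n ≤ ∑ k ∈ Finset.range (n + 1), Mk k :=
    Finset.single_le_sum
      (fun i hi => hM0 i (by have := Finset.mem_range.mp hi; omega))
      (Finset.self_mem_range_succ n)
  have hsum0 : 0 ≤ ∑ k ∈ Finset.range (n + 1), Mk k := le_trans (hM0 n le_rfl) hsum
  have hba : 0 ≤ b ^ ρ - a ^ ρ :=
    sub_nonneg.mpr (Real.rpow_le_rpow ha.le hab.le hρ.le)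
  have hK0 : 0 ≤ K := by
    rw [hK]
    exact mul_nonneg (div_nonneg (Real.rpow_pos_of_pos hρ _).le
      (Real.Gamma_pos_of_pos (by linarith)).le) (Real.rpow_nonneg hba _)
  set c : ℝ := ρ ^ (1 - (n : ℝ) + α) / Real.Gamma β with hc
  have hc0 : 0 < c := div_pos (Real.rpow_pos_of_pos hρ _) hΓ
  have hconst : c * ((b ^ ρ - a ^ ρ) ^ β / (ρ * β)) = K := by
    rw [hK, hc]
    have h1 : Real.Gamma ((n : ℝ) + 1 - α) = β * Real.Gamma β := by
      rw [show (n : ℝ) + 1 - α = β + 1 by rw [hβ]; ring, Real.Gamma_add_one hβ0.ne']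
    have h2 : ρ ^ (1 - (n : ℝ) + α) = ρ ^ (α - (n : ℝ)) * ρ := by
      rw [show (1 : ℝ) - (n : ℝ) + α = (α - (n : ℝ)) + 1 by ring,
        Real.rpow_add hρ, Real.rpow_one]
    rw [h1, h2]
    field_simp
  -- the common bound for the inner integrals
  have hxc : ContinuousOn x (Set.Icc a b) := hx.continuousOn
  -- Left pointwise bound
  have hptL : ∀ t ∈ Set.Icc a b, |caputoKatLeft a ρ α n x t| ≤ K * Mk n := by
    intro t ht
    obtain ⟨hta, htb⟩ := ht
    have hφint : IntervalIntegrable (fun τ => τ ^ (ρ - 1) * (t ^ ρ - τ ^ ρ) ^ (β - 1))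
        volume a t := myAux_integrable_left ha hρ hβ0 hβ1 hta htb
    have hφval := myAux_integral_left ha hρ hβ0 hβ1 hta htb
    set h : ℝ → ℝ := fun τ => τ ^ (ρ - 1) * (t ^ ρ - τ ^ ρ) ^ (β - 1) * iterD ρ x n τ with hh
    have hφ0 : ∀ τ ∈ Set.Icc a t, 0 ≤ τ ^ (ρ - 1) * (t ^ ρ - τ ^ ρ) ^ (β - 1) := by
      intro τ hτ
      have h0 : (0 : ℝ) ≤ t ^ ρ - τ ^ ρ :=
        sub_nonneg.mpr (Real.rpow_le_rpow (ha.trans_le hτ.1).le hτ.2 hρ.le)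
      exact mul_nonneg (Real.rpow_nonneg (ha.trans_le hτ.1).le _) (Real.rpow_nonneg h0 _)
    have hhle : ∀ τ ∈ Set.Icc a t,
        |h τ| ≤ Mk n * (τ ^ (ρ - 1) * (t ^ ρ - τ ^ ρ) ^ (β - 1)) := by
      intro τ hτ
      rw [hh, abs_mul, abs_of_nonneg (hφ0 τ hτ), mul_comm (Mk n)]
      exact mul_le_mul_of_nonneg_left
        (hle n le_rfl τ ⟨hτ.1, hτ.2.trans htb⟩) (hφ0 τ hτ)
    have hhint : IntervalIntegrable h volume a t := by
      apply (hφint.const_mul (Mk n)).mono_fun'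
      · apply AEStronglyMeasurable.mul
        · exact (myAux_meas_left ρ β t).aestronglyMeasurable
        · exact iterD_aesm measurableSet_uIoc
            (hxc.mono (fun s hs => by
              rw [Set.uIoc_of_le hta] at hs
              exact ⟨hs.1.le, hs.2.trans htb⟩)) n
      · rw [Filter.EventuallyLE, ae_restrict_iff' measurableSet_uIoc]
        apply ae_of_all
        intro τ hτ
        rw [Set.uIoc_of_le hta] at hτ
        simpa [Real.norm_eq_abs] using hhle τ ⟨hτ.1.le, hτ.2⟩
    have hIabs : |∫ τ in a..t, h τ| ≤ ∫ τ in a..t, |h τ| :=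
      intervalIntegral.abs_integral_le_integral_abs hta
    have hImono : (∫ τ in a..t, |h τ|)
        ≤ ∫ τ in a..t, Mk n * (τ ^ (ρ - 1) * (t ^ ρ - τ ^ ρ) ^ (β - 1)) :=
      intervalIntegral.integral_mono_on hta hhint.abs (hφint.const_mul (Mk n)) hhle
    have hIval : (∫ τ in a..t, Mk n * (τ ^ (ρ - 1) * (t ^ ρ - τ ^ ρ) ^ (β - 1)))
        = Mk n * ((t ^ ρ - a ^ ρ) ^ β / (ρ * β)) := by
      rw [intervalIntegral.integral_const_mul, hφval]
    have hIle : |∫ τ in a..t, h τ| ≤ Mk n * ((b ^ ρ - a ^ ρ) ^ β / (ρ * β)) := by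
      refine le_trans (hIabs.trans (hImono.trans_eq hIval)) ?_
      apply mul_le_mul_of_nonneg_left _ (hM0 n le_rfl)
      apply div_le_div_of_nonneg_right ?_ (by positivity)
      exact Real.rpow_le_rpow (sub_nonneg.mpr
        (Real.rpow_le_rpow ha.le hta hρ.le))
        (sub_le_sub_right (Real.rpow_le_rpow (ha.trans_le hta).le htb hρ.le) _) hβ0.le
    calc |caputoKatLeft a ρ α n x t| = c * |∫ τ in a..t, h τ| := by
          simp only [caputoKatLeft, ← hβ, ← hc, ← hh, abs_mul, abs_of_pos hc0]
      _ ≤ c * (Mk n * ((b ^ ρ - a ^ ρ) ^ β / (ρ * β))) :=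
          mul_le_mul_of_nonneg_left hIle hc0.le
      _ = K * Mk n := by rw [← hconst]; ring
  -- Right pointwise bound
  have hptR : ∀ t ∈ Set.Icc a b, |caputoKatRight b ρ α n x t| ≤ K * Mk n := by
    intro t ht
    obtain ⟨hta, htb⟩ := ht
    have hφint : IntervalIntegrable (fun τ => τ ^ (ρ - 1) * (τ ^ ρ - t ^ ρ) ^ (β - 1))
        volume t b := myAux_integrable_right ha hρ hβ0 hβ1 hta htb
    have hφval := myAux_integral_right ha hρ hβ0 hβ1 hta htb
    set h : ℝ → ℝ := fun τ => τ ^ (ρ - 1) * (τ ^ ρ - t ^ ρ) ^ (β - 1) *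
      ((-1 : ℝ) ^ n * iterD ρ x n τ) with hh
    have hφ0 : ∀ τ ∈ Set.Icc t b, 0 ≤ τ ^ (ρ - 1) * (τ ^ ρ - t ^ ρ) ^ (β - 1) := by
      intro τ hτ
      have h0 : (0 : ℝ) ≤ τ ^ ρ - t ^ ρ :=
        sub_nonneg.mpr (Real.rpow_le_rpow (ha.trans_le hta).le hτ.1 hρ.le)
      exact mul_nonneg (Real.rpow_nonneg ((ha.trans_le hta).trans_le hτ.1).le _)
        (Real.rpow_nonneg h0 _)
    have hhle : ∀ τ ∈ Set.Icc t b,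
        |h τ| ≤ Mk n * (τ ^ (ρ - 1) * (τ ^ ρ - t ^ ρ) ^ (β - 1)) := by
      intro τ hτ
      rw [hh, abs_mul, abs_of_nonneg (hφ0 τ hτ), mul_comm (Mk n)]
      have : |(-1 : ℝ) ^ n * iterD ρ x n τ| = |iterD ρ x n τ| := by
        rw [abs_mul, abs_pow, abs_neg, abs_one, one_pow, one_mul]
      rw [this]
      exact mul_le_mul_of_nonneg_left
        (hle n le_rfl τ ⟨hta.trans hτ.1, hτ.2⟩) (hφ0 τ hτ)
    have hhint : IntervalIntegrable h volume t b := by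
      apply (hφint.const_mul (Mk n)).mono_fun'
      · apply AEStronglyMeasurable.mul
        · exact (myAux_meas_right ρ β t).aestronglyMeasurable
        · apply AEStronglyMeasurable.const_mul
          exact iterD_aesm measurableSet_uIoc
            (hxc.mono (fun s hs => by
              rw [Set.uIoc_of_le htb] at hs
              exact ⟨hta.trans hs.1.le, hs.2⟩)) n
      · rw [Filter.EventuallyLE, ae_restrict_iff' measurableSet_uIoc]
        apply ae_of_all
        intro τ hτ
        rw [Set.uIoc_of_le htb] at hτ
        simpa [Real.norm_eq_abs] using hhle τ ⟨hτ.1.le, hτ.2⟩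
    have hIabs : |∫ τ in t..b, h τ| ≤ ∫ τ in t..b, |h τ| :=
      intervalIntegral.abs_integral_le_integral_abs htb
    have hImono : (∫ τ in t..b, |h τ|)
        ≤ ∫ τ in t..b, Mk n * (τ ^ (ρ - 1) * (τ ^ ρ - t ^ ρ) ^ (β - 1)) :=
      intervalIntegral.integral_mono_on htb hhint.abs (hφint.const_mul (Mk n)) hhle
    have hIval : (∫ τ in t..b, Mk n * (τ ^ (ρ - 1) * (τ ^ ρ - t ^ ρ) ^ (β - 1)))
        = Mk n * ((b ^ ρ - t ^ ρ) ^ β / (ρ * β)) := by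
      rw [intervalIntegral.integral_const_mul, hφval]
    have hIle : |∫ τ in t..b, h τ| ≤ Mk n * ((b ^ ρ - a ^ ρ) ^ β / (ρ * β)) := by
      refine le_trans (hIabs.trans (hImono.trans_eq hIval)) ?_
      apply mul_le_mul_of_nonneg_left _ (hM0 n le_rfl)
      apply div_le_div_of_nonneg_right ?_ (by positivity)
      exact Real.rpow_le_rpow (sub_nonneg.mpr
        (Real.rpow_le_rpow (ha.trans_le hta).le htb hρ.le))
        (sub_le_sub_left (Real.rpow_le_rpow ha.le hta hρ.le) _) hβ0.le
    calc |caputoKatRight b ρ α n x t| = c * |∫ τ in t..b, h τ| := by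
          simp only [caputoKatRight, ← hβ, ← hc, ← hh, abs_mul, abs_of_pos hc0]
      _ ≤ c * (Mk n * ((b ^ ρ - a ^ ρ) ^ β / (ρ * β))) :=
          mul_le_mul_of_nonneg_left hIle hc0.le
      _ = K * Mk n := by rw [← hconst]; ring
  have hRHS : K * Mk n ≤ K * ∑ k ∈ Finset.range (n + 1), Mk k :=
    mul_le_mul_of_nonneg_left hsum hK0
  have hRHS0 : 0 ≤ K * ∑ k ∈ Finset.range (n + 1), Mk k := mul_nonneg hK0 hsum0
  constructor
  · apply Real.sSup_le _ hRHS0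
    rintro y ⟨t, ht, rfl⟩
    exact (hptL t ht).trans hRHS
  · apply Real.sSup_le _ hRHS0
    rintro y ⟨t, ht, rfl⟩
    exact (hptR t ht).trans hRHS
end
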